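/- Let I ⊆ L be finite, let ι : I → J be a bijection onto a subset J ⊆ L with I ∩ J = ∅, let (p_M)_{M ∈ D_I} be a probability distribution, and set Φ = Σ_{M ∈ D_I} p_M^{1/2} f_{M ι(M)} ∈ H and ρ_I = Σ_{M ∈ D_I} p_M |f_M⟩⟨f_M|. Then ⟨Φ, aΦ⟩ = Tr(ρ_I a) for all a ∈ A(I); that is, the pure state given by the vector Φ reduces to the state ρ_I on A(I). -/

import Mathlib

noncomputable section
open scoped InnerProductSpace ComplexConjugate
open ContinuousLinearMap

namespace Fermion

variable (L : Type) [Fintype L] [LinearOrder L]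

/-- The fermionic Fock space over the one-particle space `h = ℓ²(L)`, realized concretely
via its orthonormal basis indexed by the finite subsets of `L` (the vectors `f_M`). -/
abbrev FockSpace := EuclideanSpace ℂ (Finset L)

variable {L}

/-- The vacuum vector `Ψ = f_∅`. -/
def vac : FockSpace L := EuclideanSpace.single ∅ 1

/-- Jordan–Wigner sign factor. -/
def jwSign (l : L) (S : Finset L) : ℂ := (-1 : ℂ) ^ (S.filter (fun k => k < l)).card

/-- The creation operator `a*_l = a*(e_l)`. -/
def cre (l : L) : FockSpace L →L[ℂ] FockSpace L :=
  LinearMap.toContinuousLinearMap <|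
    (EuclideanSpace.basisFun (Finset L) ℂ).toBasis.constr ℂ fun S =>
      if l ∈ S then 0 else jwSign l S • EuclideanSpace.single (insert l S) 1

/-- The annihilation operator `a_l = a(e_l)`. -/
def ann (l : L) : FockSpace L →L[ℂ] FockSpace L := ContinuousLinearMap.adjoint (cre l)

/-- The vector `f_{(l_1,…,l_n)} = a*_{l_1} ⋯ a*_{l_n} Ψ  (= P (e_{l_1} ⊗ ⋯ ⊗ e_{l_n}))`. -/
def fvec (M : List L) : FockSpace L := M.foldr (fun l v => cre l v) vac

/-- The algebra `A(I)` : the unital *-subalgebra of `B(H)` generated by `{a_l : l ∈ I}`. -/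
def A (I : Finset L) : StarSubalgebra ℂ (FockSpace L →L[ℂ] FockSpace L) :=
  StarAlgebra.adjoin ℂ (ann '' (I : Set L))

/-- The trace on `B(H)`. -/
def Tr (T : FockSpace L →L[ℂ] FockSpace L) : ℂ := LinearMap.trace ℂ (FockSpace L) T

/-- The rank-one operator `|x⟩⟨y|`. -/
def ketbra (x y : FockSpace L) : FockSpace L →L[ℂ] FockSpace L :=
  (ContinuousLinearMap.toSpanSingleton ℂ x).comp (innerSL ℂ y)

/-- A valid choice of `D_I`: `D S` enumerates the finite set `S` without repetitions. -/
def IsEnum (D : Finset L → List L) : Prop := ∀ S : Finset L, (D S).Nodup ∧ (D S).toFinset = S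

/-- The entangled vector `Φ = Σ_{M ∈ D_I} p_M^{1/2} f_{M ι(M)}`. -/
def Phi (D : Finset L → List L) (p : Finset L → ℝ) (I : Finset L) (ι : L → L) : FockSpace L :=
  ∑ S ∈ I.powerset, (Real.sqrt (p S) : ℂ) • fvec (D S ++ (D S).map ι)

/-- The state `φ(x) = ⟨Φ, xΦ⟩`. -/
def phi (D : Finset L → List L) (p : Finset L → ℝ) (I : Finset L) (ι : L → L)
    (x : FockSpace L →L[ℂ] FockSpace L) : ℂ :=
  ⟪Phi D p I ι, x (Phi D p I ι)⟫_ℂ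

/-! ### Auxiliary lemmas -/
set_option linter.unusedSectionVars false

lemma cre_single (l : L) (S : Finset L) :
    cre l (EuclideanSpace.single S 1) =
      if l ∈ S then 0 else jwSign l S • EuclideanSpace.single (insert l S) 1 := by
  have h : EuclideanSpace.single S (1:ℂ) = (EuclideanSpace.basisFun (Finset L) ℂ).toBasis S := by
    simp [EuclideanSpace.basisFun_apply]
  rw [cre, LinearMap.coe_toContinuousLinearMap', h, Module.Basis.constr_basis]

lemma clm_ext_basis {A B : FockSpace L →L[ℂ] FockSpace L}
    (h : ∀ S : Finset L, A (EuclideanSpace.single S 1) = B (EuclideanSpace.single S 1)) :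
    A = B :=
  ContinuousLinearMap.coe_injective <|
    (EuclideanSpace.basisFun (Finset L) ℂ).toBasis.ext (by
      simpa [EuclideanSpace.basisFun_apply] using h)

lemma adjoint_coord (B : FockSpace L →L[ℂ] FockSpace L) (x : FockSpace L) (S : Finset L) :
    (ContinuousLinearMap.adjoint B x) S = ⟪B (EuclideanSpace.single S 1), x⟫_ℂ := by
  have := EuclideanSpace.inner_single_left (𝕜 := ℂ) S (1:ℂ) (ContinuousLinearMap.adjoint B x)
  rw [map_one, one_mul] at this
  rw [← this, ContinuousLinearMap.adjoint_inner_right]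

lemma jwSign_sq (l : L) (S : Finset L) : jwSign l S * jwSign l S = 1 := by
  rw [jwSign, ← pow_add]
  exact Even.neg_one_pow ⟨_, rfl⟩

lemma jwSign_conj (l : L) (S : Finset L) : conj (jwSign l S) = jwSign l S := by
  rw [jwSign, map_pow]
  norm_num

lemma jwSign_empty (l : L) : jwSign l ∅ = 1 := by simp [jwSign]

lemma jwSign_union (l : L) {S T : Finset L} (h : Disjoint S T) :
    jwSign l (S ∪ T) = jwSign l S * jwSign l T := by
  rw [jwSign, jwSign, jwSign, Finset.filter_union, Finset.card_union_of_disjoint, pow_add]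
  exact Finset.disjoint_filter_filter h



/-- The sign `ε(S,T) = ∏_{l∈S} jwSign l T`. -/
def eps (S T : Finset L) : ℂ := ∏ l ∈ S, jwSign l T

lemma eps_sq (S T : Finset L) : eps S T * eps S T = 1 := by
  rw [eps, ← Finset.prod_mul_distrib]
  exact Finset.prod_eq_one fun l _ => jwSign_sq l T

lemma eps_conj (S T : Finset L) : conj (eps S T) = eps S T := by
  rw [eps, map_prod]
  exact Finset.prod_congr rfl fun l _ => jwSign_conj l T

lemma eps_empty_left (T : Finset L) : eps ∅ T = 1 := by simp [eps]

lemma eps_empty_right (S : Finset L) : eps S ∅ = 1 := by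
  simp [eps, jwSign_empty]

lemma eps_insert {l : L} {S : Finset L} (T : Finset L) (h : l ∉ S) :
    eps (insert l S) T = jwSign l T * eps S T := by
  rw [eps, Finset.prod_insert h, eps]

/-- The isometry `V_T : e_S ↦ ε(S,T) e_{S∪T}` on `span{e_S : S ⊆ I}`, zero elsewhere. -/
def V (I T : Finset L) : FockSpace L →L[ℂ] FockSpace L :=
  LinearMap.toContinuousLinearMap <|
    (EuclideanSpace.basisFun (Finset L) ℂ).toBasis.constr ℂ fun S =>
      if S ⊆ I then eps S T • EuclideanSpace.single (S ∪ T) 1 else 0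

lemma V_single (I T S : Finset L) :
    V I T (EuclideanSpace.single S 1) =
      if S ⊆ I then eps S T • EuclideanSpace.single (S ∪ T) 1 else 0 := by
  have h : EuclideanSpace.single S (1:ℂ) = (EuclideanSpace.basisFun (Finset L) ℂ).toBasis S := by
    simp [EuclideanSpace.basisFun_apply]
  rw [V, LinearMap.coe_toContinuousLinearMap', h, Module.Basis.constr_basis]



lemma euclid_ext {x y : FockSpace L} (h : ∀ S, x S = y S) : x = y := PiLp.ext h

lemma Vd_single (I T S : Finset L) (hT : Disjoint I T) :
    ContinuousLinearMap.adjoint (V I T) (EuclideanSpace.single S 1) =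
      if T ⊆ S ∧ S \ T ⊆ I then eps (S \ T) T • EuclideanSpace.single (S \ T) 1 else 0 := by
  apply euclid_ext
  intro R
  rw [adjoint_coord, V_single]
  by_cases hR : R ⊆ I
  · have hdisj : Disjoint R T := hT.mono_left hR
    rw [if_pos hR, inner_smul_left, eps_conj, EuclideanSpace.inner_single_left, map_one, one_mul]
    by_cases hS : S = R ∪ T
    · have h1 : S \ T = R := by rw [hS, Finset.union_sdiff_cancel_right hdisj]
      have hc : T ⊆ S ∧ S \ T ⊆ I := ⟨hS ▸ Finset.subset_union_right, h1 ▸ hR⟩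
      rw [if_pos hc, h1]
      simp [EuclideanSpace.single_apply, hS]
    · have h2 : EuclideanSpace.single S (1:ℂ) (R ∪ T) = 0 := by
        simp [EuclideanSpace.single_apply]; exact fun h => hS h.symm
      rw [h2, mul_zero]
      by_cases hc : T ⊆ S ∧ S \ T ⊆ I
      · rw [if_pos hc]
        have hne : ¬ R = S \ T := by
          intro h
          exact hS (by rw [h, Finset.sdiff_union_of_subset hc.1])
        simp only [PiLp.smul_apply, EuclideanSpace.single_apply, smul_eq_mul]
        rw [if_neg hne, mul_zero]
      · rw [if_neg hc]; rfl
  · rw [if_neg hR, inner_zero_left]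
    by_cases hc : T ⊆ S ∧ S \ T ⊆ I
    · rw [if_pos hc]
      have hne : ¬ R = S \ T := fun h => hR (by rw [h]; exact hc.2)
      simp only [PiLp.smul_apply, EuclideanSpace.single_apply, smul_eq_mul]
      rw [if_neg hne, mul_zero]
    · rw [if_neg hc]; rfl



lemma cre_comm_V {I T : Finset L} {l : L} (hl : l ∈ I) (hT : Disjoint I T) :
    (cre l).comp (V I T) = (V I T).comp (cre l) := by
  have hlT : l ∉ T := Finset.disjoint_left.mp hT hl
  apply clm_ext_basis
  intro S
  simp only [ContinuousLinearMap.comp_apply, V_single, cre_single]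
  by_cases hS : S ⊆ I
  · have hST : Disjoint S T := hT.mono_left hS
    rw [if_pos hS]
    by_cases hls : l ∈ S
    · rw [if_pos hls, map_zero, map_smul, cre_single, if_pos (Finset.mem_union_left T hls), smul_zero]
    · have hlsT : l ∉ S ∪ T := by simp [Finset.mem_union, hls, hlT]
      rw [if_neg hls, map_smul, cre_single, if_neg hlsT, map_smul, V_single,
        if_pos (Finset.insert_subset hl hS), Finset.insert_union,
        eps_insert T hls, jwSign_union l hST, smul_smul, smul_smul]
      ring_nf
  · rw [if_neg hS, map_zero]
    by_cases hls : l ∈ S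
    · rw [if_pos hls, map_zero]
    · rw [if_neg hls, map_smul, V_single,
        if_neg (fun h => hS ((Finset.subset_insert l S).trans h)), smul_zero]

lemma cre_comm_Vd {I T : Finset L} {l : L} (hl : l ∈ I) (hT : Disjoint I T) :
    (cre l).comp (ContinuousLinearMap.adjoint (V I T)) =
      (ContinuousLinearMap.adjoint (V I T)).comp (cre l) := by
  have hlT : l ∉ T := Finset.disjoint_left.mp hT hl
  apply clm_ext_basis
  intro S
  simp only [ContinuousLinearMap.comp_apply, Vd_single _ _ _ hT, cre_single]
  have hins : insert l S \ T = insert l (S \ T) := Finset.insert_sdiff_of_notMem S hlT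
  have hcond : (T ⊆ insert l S ∧ insert l S \ T ⊆ I) ↔ (T ⊆ S ∧ S \ T ⊆ I) := by
    rw [Finset.subset_insert_iff_of_notMem hlT, hins, Finset.insert_subset_iff]
    tauto
  by_cases hc : T ⊆ S ∧ S \ T ⊆ I
  · rw [if_pos hc]
    by_cases hls : l ∈ S
    · have hin : l ∈ S \ T := Finset.mem_sdiff.mpr ⟨hls, hlT⟩
      rw [if_pos hls, map_zero, map_smul, cre_single, if_pos hin, smul_zero]
    · have hlsd : l ∉ S \ T := fun h => hls (Finset.mem_sdiff.mp h).1
      rw [map_smul, cre_single, if_neg hlsd, if_neg hls, map_smul, Vd_single _ _ _ hT,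
        if_pos (hcond.mpr hc), hins, eps_insert T hlsd]
      have hjw : jwSign l S = jwSign l (S \ T) * jwSign l T := by
        conv_lhs => rw [← Finset.sdiff_union_of_subset hc.1]
        exact jwSign_union l Finset.sdiff_disjoint
      rw [smul_smul, smul_smul, hjw]
      have : jwSign l T * jwSign l T = 1 := jwSign_sq l T
      rw [show eps (S \ T) T * jwSign l (S \ T) =
        jwSign l (S \ T) * jwSign l T * (jwSign l T * eps (S \ T) T) by
          rw [show jwSign l (S \ T) * jwSign l T * (jwSign l T * eps (S \ T) T) =
            (jwSign l T * jwSign l T) * (eps (S \ T) T * jwSign l (S \ T)) by ring, this, one_mul]]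
  · rw [if_neg hc, map_zero]
    by_cases hls : l ∈ S
    · rw [if_pos hls, map_zero]
    · rw [if_neg hls, map_smul, Vd_single _ _ _ hT, if_neg (fun h => hc (hcond.mp h)), smul_zero]



lemma Vd_comp_V_ne {I T T' : Finset L} (hT : Disjoint I T) (hT' : Disjoint I T')
    (hne : T ≠ T') :
    (ContinuousLinearMap.adjoint (V I T)).comp (V I T') = 0 := by
  apply clm_ext_basis
  intro S
  rw [ContinuousLinearMap.comp_apply, V_single]
  by_cases hS : S ⊆ I
  · rw [if_pos hS, map_smul, Vd_single _ _ _ hT]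
    have hcond : ¬(T ⊆ S ∪ T' ∧ (S ∪ T') \ T ⊆ I) := by
      rintro ⟨h1, h2⟩
      apply hne
      apply Finset.Subset.antisymm
      · intro t ht
        rcases Finset.mem_union.mp (h1 ht) with h | h
        · exact absurd (hS h) (Finset.disjoint_right.mp hT ht)
        · exact h
      · intro t ht
        by_contra htT
        have : t ∈ (S ∪ T') \ T := Finset.mem_sdiff.mpr ⟨Finset.mem_union_right S ht, htT⟩
        exact Finset.disjoint_right.mp hT' ht (h2 this)
    rw [if_neg hcond, smul_zero]
    rfl
  · rw [if_neg hS, map_zero]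
    rfl

lemma Vd_comp_V_self {I T : Finset L} (hT : Disjoint I T) :
    (ContinuousLinearMap.adjoint (V I T)).comp (V I T) = V I ∅ := by
  apply clm_ext_basis
  intro S
  rw [ContinuousLinearMap.comp_apply, V_single, V_single]
  by_cases hS : S ⊆ I
  · have hdisj : Disjoint S T := hT.mono_left hS
    have h1 : (S ∪ T) \ T = S := Finset.union_sdiff_cancel_right hdisj
    rw [if_pos hS, if_pos hS, map_smul, Vd_single _ _ _ hT,
      if_pos ⟨Finset.subset_union_right, by rw [h1]; exact hS⟩, h1, smul_smul, eps_sq, one_smul,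
      eps_empty_right, Finset.union_empty, one_smul]
  · rw [if_neg hS, if_neg hS, map_zero]

/-- Key structural fact: every element of `A I` commutes with `V I T` and its adjoint. -/
lemma A_comm_V {I : Finset L} {a : FockSpace L →L[ℂ] FockSpace L} (ha : a ∈ A I) :
    ∀ T : Finset L, Disjoint I T →
      V I T * a = a * V I T ∧
        ContinuousLinearMap.adjoint (V I T) * a = a * ContinuousLinearMap.adjoint (V I T) := by
  induction ha using StarAlgebra.adjoin_induction with
  | mem x hx =>
    obtain ⟨l, hl, rfl⟩ := hx
    intro T hT
    have hl' : l ∈ I := hl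
    constructor
    · -- V * ann l = ann l * V  : adjoint of cre_comm_Vd
      have := congrArg ContinuousLinearMap.adjoint (cre_comm_Vd hl' hT)
      rw [ContinuousLinearMap.adjoint_comp, ContinuousLinearMap.adjoint_comp,
        ContinuousLinearMap.adjoint_adjoint] at this
      rw [ContinuousLinearMap.mul_def, ContinuousLinearMap.mul_def, ann]
      exact this
    · -- Vd * ann l = ann l * Vd : adjoint of cre_comm_V
      have := congrArg ContinuousLinearMap.adjoint (cre_comm_V hl' hT)
      rw [ContinuousLinearMap.adjoint_comp, ContinuousLinearMap.adjoint_comp] at this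
      rw [ContinuousLinearMap.mul_def, ContinuousLinearMap.mul_def, ann]
      exact this
  | algebraMap r =>
    intro T hT
    exact ⟨(Algebra.commutes r _).symm, (Algebra.commutes r _).symm⟩
  | add x y hx hy ihx ihy =>
    intro T hT
    obtain ⟨h1, h2⟩ := ihx T hT
    obtain ⟨h3, h4⟩ := ihy T hT
    constructor
    · rw [mul_add, add_mul, h1, h3]
    · rw [mul_add, add_mul, h2, h4]
  | mul x y hx hy ihx ihy =>
    intro T hT
    obtain ⟨h1, h2⟩ := ihx T hT
    obtain ⟨h3, h4⟩ := ihy T hT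
    constructor
    · rw [← mul_assoc, h1, mul_assoc, h3, mul_assoc]
    · rw [← mul_assoc, h2, mul_assoc, h4, mul_assoc]
  | star x hx ihx =>
    intro T hT
    obtain ⟨h1, h2⟩ := ihx T hT
    constructor
    · have := congrArg star h2
      rw [star_mul, star_mul, ← ContinuousLinearMap.star_eq_adjoint, star_star] at this
      exact this.symm
    · have := congrArg star h1
      rw [star_mul, star_mul] at this
      rw [← ContinuousLinearMap.star_eq_adjoint]
      exact this.symm



lemma jwSign_pm (l : L) (S : Finset L) : jwSign l S = 1 ∨ jwSign l S = -1 := by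
  rw [jwSign]
  rcases Nat.even_or_odd ((S.filter (fun k => k < l)).card) with h | h
  · exact Or.inl (Even.neg_one_pow h)
  · exact Or.inr (Odd.neg_one_pow h)

lemma fvec_sign {M : List L} (h : M.Nodup) :
    ∃ c : ℂ, (c = 1 ∨ c = -1) ∧ fvec M = c • EuclideanSpace.single M.toFinset 1 := by
  induction M with
  | nil => exact ⟨1, Or.inl rfl, by simp [fvec, vac]⟩
  | cons l M ih =>
    obtain ⟨c, hc, hM⟩ := ih (List.Nodup.of_cons h)
    have hl : l ∉ M.toFinset := by
      rw [List.mem_toFinset]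
      exact (List.nodup_cons.mp h).1
    refine ⟨jwSign l M.toFinset * c, ?_, ?_⟩
    · rcases jwSign_pm l M.toFinset with h1 | h1 <;> rcases hc with h2 | h2 <;>
        rw [h1, h2] <;> norm_num
    · show cre l (fvec M) = _
      rw [hM, map_smul, cre_single, if_neg hl, List.toFinset_cons, smul_smul, mul_comm]

lemma foldr_cre_V {I T : Finset L} (hT : Disjoint I T) {M : List L} (hM : ∀ l ∈ M, l ∈ I)
    (x : FockSpace L) :
    List.foldr (fun l v => cre l v) (V I T x) M =
      V I T (List.foldr (fun l v => cre l v) x M) := by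
  induction M with
  | nil => rfl
  | cons l M ih =>
    rw [List.foldr_cons, List.foldr_cons, ih (fun k hk => hM k (List.mem_cons_of_mem l hk))]
    exact congrFun (congrArg DFunLike.coe (cre_comm_V (hM l List.mem_cons_self) hT)) _

lemma V_vac {I T : Finset L} : V I T vac = EuclideanSpace.single T 1 := by
  rw [vac, V_single, if_pos (Finset.empty_subset I), eps_empty_left, Finset.empty_union, one_smul]

lemma foldr_cre_smul (M : List L) (v : FockSpace L) (d : ℂ) :
    List.foldr (fun l w => cre l w) (d • v) M = d • List.foldr (fun l w => cre l w) v M := by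
  induction M with
  | nil => rfl
  | cons l M ih => rw [List.foldr_cons, List.foldr_cons, ih, map_smul]

lemma fvec_append_eq {I T : Finset L} (hT : Disjoint I T) {M N : List L}
    (hM : ∀ l ∈ M, l ∈ I) (hN : N.Nodup) (hNT : N.toFinset = T) :
    ∃ c : ℂ, (c = 1 ∨ c = -1) ∧ fvec (M ++ N) = c • V I T (fvec M) := by
  obtain ⟨c, hc, hfN⟩ := fvec_sign hN
  refine ⟨c, hc, ?_⟩
  have h1 : fvec (M ++ N) = List.foldr (fun l v => cre l v) (fvec N) M := by
    rw [fvec, List.foldr_append]; rfl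
  rw [h1, hfN, hNT]
  have h2 : (EuclideanSpace.single T (1:ℂ)) = V I T vac := V_vac.symm
  rw [h2]
  rw [foldr_cre_smul, foldr_cre_V hT hM]
  rfl



lemma Tr_eq_sum (B : FockSpace L →L[ℂ] FockSpace L) :
    Tr B = ∑ S : Finset L, B (EuclideanSpace.single S 1) S := by
  rw [Tr, LinearMap.trace_eq_matrix_trace ℂ (EuclideanSpace.basisFun (Finset L) ℂ).toBasis,
    Matrix.trace]
  apply Finset.sum_congr rfl
  intro S _
  rw [Matrix.diag_apply, LinearMap.toMatrix_apply]
  simp [EuclideanSpace.basisFun_apply]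

lemma ketbra_apply (x y z : FockSpace L) : ketbra x y z = ⟪y, z⟫_ℂ • x := rfl

lemma Tr_ketbra_mul (x y : FockSpace L) (a : FockSpace L →L[ℂ] FockSpace L) :
    Tr (ketbra x y * a) = ⟪y, a x⟫_ℂ := by
  rw [Tr_eq_sum]
  have hx : x = ∑ S : Finset L, x S • EuclideanSpace.single S 1 := by
    conv_lhs => rw [← (EuclideanSpace.basisFun (Finset L) ℂ).sum_repr x]
    apply Finset.sum_congr rfl
    intro S _
    rw [EuclideanSpace.basisFun_repr, EuclideanSpace.basisFun_apply]
  conv_rhs => rw [hx]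
  rw [map_sum, inner_sum]
  apply Finset.sum_congr rfl
  intro S _
  rw [ContinuousLinearMap.mul_apply, ketbra_apply, map_smul, inner_smul_right]
  simp only [PiLp.smul_apply, smul_eq_mul]
  ring



lemma V_fix {I S : Finset L} (hS : S ⊆ I) {M : List L} (hM : M.Nodup) (hMS : M.toFinset = S) :
    V I ∅ (fvec M) = fvec M := by
  obtain ⟨c, _, hfc⟩ := fvec_sign hM
  rw [hfc, hMS, map_smul, V_single, if_pos hS, eps_empty_right, Finset.union_empty, one_smul]

/-- Let `I ⊆ L` be finite, `ι : I → J` a bijection onto `J ⊆ L` with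
`I ∩ J = ∅`, `(p_M)_{M ∈ D_I}` a probability distribution, and set
`Φ = Σ_{M ∈ D_I} p_M^{1/2} f_{M ι(M)}` and `ρ_I = Σ_{M ∈ D_I} p_M |f_M⟩⟨f_M|`.
Then `⟨Φ, aΦ⟩ = Tr(ρ_I a)` for all `a ∈ A(I)`. -/
theorem entangled_state_reduces_first
    {L : Type} [Fintype L] [LinearOrder L]
    (I J : Finset L) (ι : L → L)
    (hinj : Set.InjOn ι (I : Set L)) (himg : I.image ι = J) (hIJ : Disjoint I J)
    (D : Finset L → List L) (hD : IsEnum D)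
    (p : Finset L → ℝ)
    (hp0 : ∀ S ∈ I.powerset, 0 ≤ p S) (hp1 : ∑ S ∈ I.powerset, p S = 1) :
    ∀ a ∈ A I,
      ⟪Phi D p I ι, a (Phi D p I ι)⟫_ℂ
        = Tr ((∑ S ∈ I.powerset, ((p S : ℝ) : ℂ) • ketbra (fvec (D S)) (fvec (D S))) * a) := by
  intro a ha
  have hTdisj : ∀ S ∈ I.powerset, Disjoint I (S.image ι) := by
    intro S hS
    refine hIJ.mono_right ?_
    rw [← himg]
    exact Finset.image_subset_image (Finset.mem_powerset.mp hS)
  have hMI : ∀ S ∈ I.powerset, ∀ l ∈ D S, l ∈ I := by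
    intro S hS l hl
    exact Finset.mem_powerset.mp hS ((hD S).2 ▸ List.mem_toFinset.mpr hl)
  have hmapnod : ∀ S ∈ I.powerset, ((D S).map ι).Nodup := by
    intro S hS
    exact (hD S).1.map_on fun x hx y hy hxy =>
      hinj (Finset.mem_coe.mpr (hMI S hS x hx)) (Finset.mem_coe.mpr (hMI S hS y hy)) hxy
  have hmapto : ∀ S : Finset L, ((D S).map ι).toFinset = S.image ι := by
    intro S
    ext x
    simp only [List.mem_toFinset, List.mem_map, Finset.mem_image]
    constructor
    · rintro ⟨y, hy, rfl⟩
      refine ⟨y, ?_, rfl⟩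
      rw [← (hD S).2]
      exact List.mem_toFinset.mpr hy
    · rintro ⟨y, hy, rfl⟩
      refine ⟨y, ?_, rfl⟩
      rw [← (hD S).2] at hy
      exact List.mem_toFinset.mp hy
  have key : ∀ S ∈ I.powerset, ∀ S' ∈ I.powerset,
      ⟪fvec (D S ++ (D S).map ι), a (fvec (D S' ++ (D S').map ι))⟫_ℂ
        = if S = S' then ⟪fvec (D S), a (fvec (D S))⟫_ℂ else 0 := by
    intro S hS S' hS'
    obtain ⟨c, hc, hfc⟩ := fvec_append_eq (hTdisj S hS) (hMI S hS) (hmapnod S hS) (hmapto S)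
    have hcr : conj c = c := by rcases hc with h | h <;> rw [h] <;> simp
    by_cases hSS : S = S'
    · subst hSS
      rw [if_pos rfl, hfc, map_smul, inner_smul_left, inner_smul_right, hcr, ← mul_assoc]
      have hcc : c * c = 1 := by rcases hc with h | h <;> rw [h] <;> norm_num
      rw [hcc, one_mul]
      have hcm := (A_comm_V ha (S.image ι) (hTdisj S hS)).1
      have h4 : a (V I (S.image ι) (fvec (D S))) = V I (S.image ι) (a (fvec (D S))) := by
        have h5 : (a * V I (S.image ι)) (fvec (D S)) = (V I (S.image ι) * a) (fvec (D S)) := by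
          rw [hcm]
        simpa using h5
      rw [h4, ← ContinuousLinearMap.adjoint_inner_right]
      have h6 : ContinuousLinearMap.adjoint (V I (S.image ι)) (V I (S.image ι) (a (fvec (D S))))
          = V I ∅ (a (fvec (D S))) := by
        have := congrFun (congrArg DFunLike.coe (Vd_comp_V_self (hTdisj S hS))) (a (fvec (D S)))
        simpa using this
      rw [h6]
      have hcm0 := (A_comm_V ha ∅ (Finset.disjoint_empty_right I)).1
      have h7 : V I ∅ (a (fvec (D S))) = a (V I ∅ (fvec (D S))) := by
        have h8 : (V I ∅ * a) (fvec (D S)) = (a * V I ∅) (fvec (D S)) := by rw [hcm0]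
        simpa using h8
      rw [h7, V_fix (Finset.mem_powerset.mp hS) (hD S).1 (hD S).2]
    · rw [if_neg hSS]
      obtain ⟨c', hc', hfc'⟩ :=
        fvec_append_eq (hTdisj S' hS') (hMI S' hS') (hmapnod S' hS') (hmapto S')
      rw [hfc, hfc', map_smul, inner_smul_left, inner_smul_right]
      have hcm := (A_comm_V ha (S'.image ι) (hTdisj S' hS')).1
      have h4 : a (V I (S'.image ι) (fvec (D S'))) = V I (S'.image ι) (a (fvec (D S'))) := by
        have h5 : (a * V I (S'.image ι)) (fvec (D S')) = (V I (S'.image ι) * a) (fvec (D S')) := by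
          rw [hcm]
        simpa using h5
      rw [h4, ← ContinuousLinearMap.adjoint_inner_right]
      have himgne : S.image ι ≠ S'.image ι := by
        intro h
        apply hSS
        apply Finset.coe_injective
        refine (hinj.image_eq_image_iff ?_ ?_).mp ?_
        · exact Finset.coe_subset.mpr (Finset.mem_powerset.mp hS)
        · exact Finset.coe_subset.mpr (Finset.mem_powerset.mp hS')
        · rw [← Finset.coe_image, ← Finset.coe_image, h]
      have h6 : ContinuousLinearMap.adjoint (V I (S.image ι)) (V I (S'.image ι) (a (fvec (D S'))))
          = 0 := by
        have := congrFun (congrArg DFunLike.coe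
          (Vd_comp_V_ne (hTdisj S hS) (hTdisj S' hS') himgne)) (a (fvec (D S')))
        simpa using this
      rw [h6, inner_zero_right, mul_zero, mul_zero]
  calc ⟪Phi D p I ι, a (Phi D p I ι)⟫_ℂ
      = ∑ S ∈ I.powerset, ∑ S' ∈ I.powerset,
          conj ((Real.sqrt (p S) : ℂ)) * (Real.sqrt (p S') : ℂ) *
            ⟪fvec (D S ++ (D S).map ι), a (fvec (D S' ++ (D S').map ι))⟫_ℂ := by
        rw [Phi, map_sum, sum_inner]
        refine Finset.sum_congr rfl fun S hS => ?_
        rw [inner_sum]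
        refine Finset.sum_congr rfl fun S' hS' => ?_
        rw [map_smul, inner_smul_left, inner_smul_right]
        ring
    _ = ∑ S ∈ I.powerset, (p S : ℂ) * ⟪fvec (D S), a (fvec (D S))⟫_ℂ := by
        refine Finset.sum_congr rfl fun S hS => ?_
        rw [Finset.sum_eq_single S]
        · rw [key S hS S hS, if_pos rfl, Complex.conj_ofReal,
            ← Complex.ofReal_mul, Real.mul_self_sqrt (hp0 S hS)]
        · intro S' hS' hne
          rw [key S hS S' hS', if_neg (fun h => hne h.symm), mul_zero]
        · intro h
          exact absurd hS h
    _ = Tr ((∑ S ∈ I.powerset, ((p S : ℝ) : ℂ) • ketbra (fvec (D S)) (fvec (D S))) * a) := by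
        rw [Finset.sum_mul]
        have h9 : ∀ S ∈ I.powerset,
            (((p S : ℝ) : ℂ) • ketbra (fvec (D S)) (fvec (D S))) * a
              = ((p S : ℝ) : ℂ) • (ketbra (fvec (D S)) (fvec (D S)) * a) :=
          fun S _ => smul_mul_assoc _ _ _
        rw [Finset.sum_congr rfl h9]
        rw [Tr, ContinuousLinearMap.coe_sum]
        rw [map_sum]
        refine (Finset.sum_congr rfl fun S hS => ?_).symm
        rw [ContinuousLinearMap.coe_smul, map_smul, smul_eq_mul]
        congr 1
        exact Tr_ketbra_mul _ _ _

end Fermion
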